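/- Let f ∈ HL₀(B_X, Y). Then f has finite rank, i.e., the linear span of Im_L(f) is finite dimensional, if and only if the linearization T_f ∈ L(G₀(B_X), Y) has finite rank; moreover dim lin(Im_L(f)) = rank(T_f). -/
import Mathlib


open Metric Set Filter Topology

noncomputable section

universe u

def LipImage {X Y : Type*} [NormedAddCommGroup X] [NormedSpace ℂ X]
    [NormedAddCommGroup Y] [NormedSpace ℂ Y] (f : X → Y) : Set Y :=
  {v | ∃ x ∈ ball (0 : X) 1, ∃ y ∈ ball (0 : X) 1, x ≠ y ∧ v = ‖x - y‖⁻¹ • (f x - f y)}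

def MemHL {X Y : Type*} [NormedAddCommGroup X] [NormedSpace ℂ X]
    [NormedAddCommGroup Y] [NormedSpace ℂ Y] (f : X → Y) : Prop :=
  f 0 = 0 ∧ DifferentiableOn ℂ f (ball (0 : X) 1) ∧
    ∃ C : ℝ, ∀ x ∈ ball (0 : X) 1, ∀ y ∈ ball (0 : X) 1, ‖f x - f y‖ ≤ C * ‖x - y‖

def LipNorm {X Y : Type*} [NormedAddCommGroup X] [NormedSpace ℂ X]
    [NormedAddCommGroup Y] [NormedSpace ℂ Y] (f : X → Y) : ℝ :=
  sSup ((fun p : X × X => ‖f p.1 - f p.2‖ / ‖p.1 - p.2‖) ''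
    {p : X × X | p.1 ∈ ball (0 : X) 1 ∧ p.2 ∈ ball (0 : X) 1 ∧ p.1 ≠ p.2})

section Aux

variable {X Y G : Type*}
    [NormedAddCommGroup X] [NormedSpace ℂ X]
    [NormedAddCommGroup Y] [NormedSpace ℂ Y]
    [NormedAddCommGroup G] [NormedSpace ℂ G]

def LipImage' (f : X → Y) : Set Y :=
  {v | ∃ x ∈ ball (0 : X) 1, ∃ y ∈ ball (0 : X) 1, x ≠ y ∧ v = ‖x - y‖⁻¹ • (f x - f y)}

lemma span_LipImage'_eq (f : X → Y) (hf0 : f 0 = 0) :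
    Submodule.span ℂ (LipImage' f) = Submodule.span ℂ (f '' ball (0 : X) 1) := by
  apply le_antisymm
  · rw [Submodule.span_le]
    rintro v ⟨x, hx, y, hy, hxy, rfl⟩
    rw [← Complex.coe_smul]
    exact Submodule.smul_mem _ _ (Submodule.sub_mem _
      (Submodule.subset_span ⟨x, hx, rfl⟩) (Submodule.subset_span ⟨y, hy, rfl⟩))
  · rw [Submodule.span_le]
    rintro v ⟨x, hx, rfl⟩
    by_cases hx0 : x = 0
    · simp [hx0, hf0]
    · have h0 : (0 : X) ∈ ball (0 : X) 1 := by simp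
      have hv : (‖x - 0‖⁻¹ • (f x - f 0) : Y) ∈ LipImage' f :=
        ⟨x, hx, 0, h0, hx0, rfl⟩
      have : f x = (‖x‖ : ℂ) • (‖x - 0‖⁻¹ • (f x - f 0)) := by
        rw [hf0, sub_zero, sub_zero, Complex.coe_smul, smul_smul,
          mul_inv_cancel₀ (norm_ne_zero_iff.2 hx0), one_smul]
      rw [this]
      exact Submodule.smul_mem _ _ (Submodule.subset_span hv)

end Aux

/-- f ∈ HL₀(B_X, Y) has finite rank (the linear span of Im_L(f) is
finite dimensional) iff its linearization T_f has finite rank, and the dimension of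
lin(Im_L(f)) equals the rank of T_f. -/
theorem finiteRankHL_iff_linearization_finiteRank {X Y G : Type*}
    [NormedAddCommGroup X] [NormedSpace ℂ X] [CompleteSpace X]
    [NormedAddCommGroup Y] [NormedSpace ℂ Y] [CompleteSpace Y]
    [NormedAddCommGroup G] [NormedSpace ℂ G] [CompleteSpace G]
    (δX : X → G) (hδ : MemHL δX)
    (hdense : Dense (Submodule.span ℂ (δX '' ball (0 : X) 1) : Set G))
    (f : X → Y) (hf : MemHL f)
    (Tf : G →L[ℂ] Y) (hTf : ∀ x ∈ ball (0 : X) 1, Tf (δX x) = f x) :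
    (FiniteDimensional ℂ (Submodule.span ℂ (LipImage f)) ↔
      FiniteDimensional ℂ (LinearMap.range (Tf : G →ₗ[ℂ] Y))) ∧
    Module.finrank ℂ (Submodule.span ℂ (LipImage f))
      = Module.finrank ℂ (LinearMap.range (Tf : G →ₗ[ℂ] Y)) := by
  have hLip : LipImage f = LipImage' f := rfl
  set S : Submodule ℂ Y := Submodule.span ℂ (f '' ball (0 : X) 1) with hS
  have hspan : Submodule.span ℂ (LipImage f) = S := by
    rw [hLip]; exact span_LipImage'_eq f hf.1
  -- image of span of δ under Tf is S
  have himg : Tf '' (δX '' ball (0 : X) 1) = f '' ball (0 : X) 1 := by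
    ext v
    constructor
    · rintro ⟨_, ⟨x, hx, rfl⟩, rfl⟩; exact ⟨x, hx, (hTf x hx).symm⟩
    · rintro ⟨x, hx, rfl⟩; exact ⟨δX x, ⟨x, hx, rfl⟩, hTf x hx⟩
  have hmap : Submodule.map (Tf : G →ₗ[ℂ] Y) (Submodule.span ℂ (δX '' ball (0 : X) 1)) = S := by
    rw [Submodule.map_span, Set.image_image]
    simp only [ContinuousLinearMap.coe_coe]
    rw [← Set.image_image, himg]
  have hSle : S ≤ LinearMap.range (Tf : G →ₗ[ℂ] Y) := by
    rw [← hmap]; exact LinearMap.map_le_range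
  -- range ⊆ closure S
  have hrange : (LinearMap.range (Tf : G →ₗ[ℂ] Y) : Set Y) ⊆ closure (S : Set Y) := by
    rintro v ⟨g, rfl⟩
    have hg : g ∈ closure (Submodule.span ℂ (δX '' ball (0 : X) 1) : Set G) := by
      rw [hdense.closure_eq]; trivial
    have hc : ContinuousWithinAt Tf (Submodule.span ℂ (δX '' ball (0 : X) 1) : Set G) g :=
      (Tf.continuous.continuousAt).continuousWithinAt
    have := hc.mem_closure_image hg
    refine closure_mono ?_ this
    rintro _ ⟨w, hw, rfl⟩
    rw [← hmap]
    exact ⟨w, hw, rfl⟩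
  -- key: if S fin dim then range = S
  have key : ∀ (_ : FiniteDimensional ℂ S),
      LinearMap.range (Tf : G →ₗ[ℂ] Y) = S := by
    intro hfd
    apply le_antisymm _ hSle
    intro v hv
    have := hrange hv
    rwa [S.closed_of_finiteDimensional.closure_eq] at this
  constructor
  · rw [hspan]
    constructor
    · intro h; rw [key h]; exact h
    · intro h; exact Submodule.finiteDimensional_of_le hSle
  · rw [hspan]
    by_cases h : FiniteDimensional ℂ S
    · rw [key h]
    · have h2 : ¬ FiniteDimensional ℂ (LinearMap.range (Tf : G →ₗ[ℂ] Y)) := by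
        intro h2; exact h (Submodule.finiteDimensional_of_le hSle)
      rw [Module.finrank_of_infinite_dimensional h, Module.finrank_of_infinite_dimensional h2]
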